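/- For 3×3 matrices A, B over a field of characteristic zero, if H([A,B]) = 0 then the nine matrices I, A, A², B, B², AB, BA, [A,[A,B]], [B,[B,A]] are linearly dependent. -/

import Mathlib

open Matrix Polynomial

/-- Determinant of the 9×9 matrix whose columns are the vectorizations of nine 3×3 matrices. -/
noncomputable def vecDet {K : Type*} [CommRing K]
    (v : Fin 9 → Matrix (Fin 3) (Fin 3) K) : K :=
  Matrix.det (Matrix.of fun p q : Fin 3 × Fin 3 =>
    v (finProdFinEquiv q) p.1 p.2)

/-- H(M) = (tr(M)² − tr(M²))/2. -/
noncomputable def Hm {K : Type*} [Field K] (M : Matrix (Fin 3) (Fin 3) K) : K :=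
  (Matrix.trace M ^ 2 - Matrix.trace (M * M)) / 2

/-- The nine matrices I, A, A², B, B², AB, BA, [A,[A,B]], [B,[B,A]]. -/
def nine {K : Type*} [CommRing K] (A B : Matrix (Fin 3) (Fin 3) K) :
    Fin 9 → Matrix (Fin 3) (Fin 3) K :=
  ![1, A, A ^ 2, B, B ^ 2, A * B, B * A,
    A * (A * B - B * A) - (A * B - B * A) * A,
    B * (B * A - A * B) - (B * A - A * B) * B]

private lemma rot4 {K : Type*} [CommRing K] (W X Y Z : Matrix (Fin 3) (Fin 3) K) :
    Matrix.trace (W * X * Y * Z) = Matrix.trace (Z * W * X * Y) := by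
  rw [Matrix.trace_mul_comm (W * X * Y) Z, ← mul_assoc, ← mul_assoc]

private lemma tr_sbm {K : Type*} [CommRing K] (C : Matrix (Fin 3) (Fin 3) K) (i j : Fin 3) :
    Matrix.trace (C * Matrix.single j i 1) = C i j := by
  simp [Matrix.trace_fin_three, Matrix.mul_apply, Fin.sum_univ_three, Matrix.single]
  fin_cases i <;> fin_cases j <;> simp

theorem stmt_14 {K : Type*} [Field K] [CharZero K] (A B : Matrix (Fin 3) (Fin 3) K)
    (hH : Hm (A * B - B * A) = 0) :
    ¬ LinearIndependent K (nine A B) := by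
  intro hli
  by_cases hC0 : A * B - B * A = 0
  · have h56 : nine A B 5 = nine A B 6 := by
      show A * B = B * A
      linear_combination (norm := abel) hC0
    exact absurd (hli.injective h56) (by decide)
  · set C := A * B - B * A with hC
    -- trace of C is 0
    have h0 : Matrix.trace C = 0 := by
      rw [hC, Matrix.trace_sub, Matrix.trace_mul_comm A B, sub_self]
    -- trace of C*C is 0
    have h2 : Matrix.trace (C * C) = 0 := by
      rw [Hm, _root_.div_eq_zero_iff] at hH
      rcases hH with h | h
      · rw [h0] at h; linear_combination -h
      · exact absurd h two_ne_zero
    -- rotation facts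
    have r1 := rot4 B A B A
    have r2 := rot4 B A A B
    have r3 := rot4 B B A A
    have h2' : Matrix.trace (A*B*A*B) - Matrix.trace (A*B*B*A)
        - Matrix.trace (B*A*A*B) + Matrix.trace (B*A*B*A) = 0 := by
      rw [← h2, hC]
      simp only [Matrix.sub_mul, Matrix.mul_sub, Matrix.trace_sub, ← mul_assoc]
      ring
    -- the trace functional against C
    set φ : Matrix (Fin 3) (Fin 3) K →ₗ[K] K :=
      (Matrix.traceLinearMap (Fin 3) K K).comp (LinearMap.mulLeft K C) with hφ
    have hker : ∀ i, nine A B i ∈ LinearMap.ker φ := by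
      intro i
      rw [LinearMap.mem_ker]
      fin_cases i
      · show Matrix.trace (C * 1) = 0
        rw [mul_one]; exact h0
      · show Matrix.trace (C * A) = 0
        rw [hC]
        simp only [Matrix.sub_mul, Matrix.trace_sub, ← mul_assoc]
        rw [Matrix.trace_mul_cycle B A A, sub_self]
      · show Matrix.trace (C * A ^ 2) = 0
        rw [hC, pow_two]
        simp only [Matrix.sub_mul, Matrix.mul_sub, Matrix.trace_sub, ← mul_assoc]
        rw [rot4 B A A A, sub_self]
      · show Matrix.trace (C * B) = 0
        rw [hC]
        simp only [Matrix.sub_mul, Matrix.trace_sub, ← mul_assoc]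
        rw [Matrix.trace_mul_cycle A B B, sub_self]
      · show Matrix.trace (C * B ^ 2) = 0
        rw [hC, pow_two]
        simp only [Matrix.sub_mul, Matrix.mul_sub, Matrix.trace_sub, ← mul_assoc]
        rw [rot4 A B B B, sub_self]
      · show Matrix.trace (C * (A * B)) = 0
        rw [hC]
        simp only [Matrix.sub_mul, Matrix.mul_sub, Matrix.trace_sub, ← mul_assoc]
        linear_combination h2' / 2 - r1 / 2 - (r2 + r3) / 2
      · show Matrix.trace (C * (B * A)) = 0
        rw [hC]
        simp only [Matrix.sub_mul, Matrix.mul_sub, Matrix.trace_sub, ← mul_assoc]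
        linear_combination (-h2' - r1 - r2 - r3) / 2
      · show Matrix.trace (C * (A * C - C * A)) = 0
        simp only [Matrix.mul_sub, Matrix.trace_sub, ← mul_assoc]
        rw [Matrix.trace_mul_cycle C A C, sub_self]
      · show Matrix.trace (C * (B * (B * A - A * B) - (B * A - A * B) * B)) = 0
        have hBA : B * (B * A - A * B) - (B * A - A * B) * B = C * B - B * C := by
          rw [hC]; noncomm_ring
        rw [hBA]
        simp only [Matrix.mul_sub, Matrix.trace_sub, ← mul_assoc]
        rw [Matrix.trace_mul_cycle C B C, sub_self]
    -- φ is not zero, so its kernel is a proper subspace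
    obtain ⟨i, j, hij⟩ : ∃ i j, C i j ≠ 0 := by
      by_contra h
      push_neg at h
      exact hC0 (by ext i j; simpa using h i j)
    have hker_lt : LinearMap.ker φ < ⊤ := by
      rw [lt_top_iff_ne_top]
      intro htop
      have : φ (Matrix.single j i 1) = 0 := by
        rw [← LinearMap.mem_ker, htop]; trivial
      rw [show φ (Matrix.single j i 1) = Matrix.trace (C * Matrix.single j i 1) from rfl,
        tr_sbm] at this
      exact hij this
    -- restrict the nine matrices to the kernel
    have hli' : LinearIndependent K (fun i => (⟨nine A B i, hker i⟩ : LinearMap.ker φ)) := by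
      apply LinearIndependent.of_comp (LinearMap.ker φ).subtype
      exact hli
    have hle := hli'.fintype_card_le_finrank
    have hlt := Submodule.finrank_lt (K := K) hker_lt.ne
    have hfr : Module.finrank K (Matrix (Fin 3) (Fin 3) K) = 9 := by
      simp [Module.finrank_matrix]
    rw [hfr] at hlt
    simp only [Fintype.card_fin] at hle
    omega
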